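/- For every positive integer d and every τ ≥ 1, ∫_0^∞ (∫_τ^{max(x,τ)} |H_d(t)|/t dt) φ(x) dx ≤ e^{−τ²/4}, where φ(x) = e^{−x²/2}/√(2π) is the standard Gaussian density (the inner integral is 0 when x ≤ τ). -/

import Mathlib

open MeasureTheory ProbabilityTheory Real

/-- The `d`-th normalized Hermite polynomial (as a function on `ℝ`): the monic
probabilist's Hermite polynomial divided by `√(d!)`. -/
noncomputable def normHermite (d : ℕ) (x : ℝ) : ℝ :=
  Polynomial.aeval x (Polynomial.hermite d) / Real.sqrt (Nat.factorial d)

/-- The standard Gaussian density on `ℝ`. -/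
noncomputable def gaussDensity (x : ℝ) : ℝ := Real.exp (-x ^ 2 / 2) / Real.sqrt (2 * π)

open Polynomial

lemma abs_pow_le_factorial_mul_exp (x : ℝ) (n : ℕ) : |x| ^ n ≤ (n.factorial : ℝ) * Real.exp |x| := by
  have h := Real.pow_div_factorial_le_exp (x := |x|) (abs_nonneg x) n
  have hf : (0:ℝ) < (n.factorial : ℝ) := by positivity
  rw [div_le_iff₀ hf] at h
  linarith [h]

lemma integrable_pow_gauss (n : ℕ) :
    Integrable (fun x : ℝ => x ^ n * Real.exp (-(x ^ 2 / 2))) := by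
  have hint : Integrable (fun x : ℝ => ((n.factorial : ℝ) * Real.exp 1) * Real.exp (-(1/4) * x ^ 2)) :=
    (integrable_exp_neg_mul_sq (by norm_num)).const_mul _
  refine hint.mono' ?_ ?_
  · exact ((continuous_pow n).mul (by continuity)).aestronglyMeasurable
  · filter_upwards with x
    rw [Real.norm_eq_abs, abs_mul, abs_pow, abs_of_nonneg (Real.exp_pos _).le]
    calc |x| ^ n * Real.exp (-(x ^ 2 / 2))
        ≤ ((n.factorial : ℝ) * Real.exp |x|) * Real.exp (-(x ^ 2 / 2)) := by
          apply mul_le_mul_of_nonneg_right (abs_pow_le_factorial_mul_exp x n) (Real.exp_pos _).le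
      _ = (n.factorial : ℝ) * Real.exp (|x| + -(x ^ 2 / 2)) := by rw [mul_assoc, ← Real.exp_add]
      _ ≤ ((n.factorial : ℝ) * Real.exp 1) * Real.exp (-(1/4) * x ^ 2) := by
          rw [mul_assoc, ← Real.exp_add]
          have : |x| + -(x ^ 2 / 2) ≤ 1 + -(1/4) * x ^ 2 := by
            nlinarith [sq_nonneg (|x| - 2), sq_abs x]
          exact mul_le_mul_of_nonneg_left (Real.exp_le_exp.2 this) (by positivity)

lemma integrable_poly_gauss (p : ℝ[X]) :
    Integrable (fun x : ℝ => aeval x p * Real.exp (-(x ^ 2 / 2))) := by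
  have : (fun x : ℝ => aeval x p * Real.exp (-(x ^ 2 / 2)))
      = fun x : ℝ => ∑ i ∈ Finset.range (p.natDegree + 1),
          p.coeff i * (x ^ i * Real.exp (-(x ^ 2 / 2))) := by
    funext x
    rw [show (aeval x) p = p.eval x from rfl]
    rw [Polynomial.eval_eq_sum_range, Finset.sum_mul]
    congr 1; funext i; ring
  rw [this]
  exact integrable_finset_sum _ fun i _ => (integrable_pow_gauss i).const_mul _

/-- The Hermite polynomial as a real polynomial. -/
noncomputable def Hr (n : ℕ) : ℝ[X] := (hermite n).map (Int.castRingHom ℝ)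

lemma aeval_hermite_eq_Hr (n : ℕ) (x : ℝ) : aeval x (hermite n) = (Hr n).eval x := by
  rw [Hr, Polynomial.eval_map, Polynomial.aeval_def]
  norm_num

lemma Hr_succ (n : ℕ) : Hr (n + 1) = X * Hr n - derivative (Hr n) := by
  rw [Hr, hermite_succ, Polynomial.map_sub, Polynomial.map_mul, Polynomial.map_X,
    ← Polynomial.derivative_map]
  rfl

lemma Hr_monic (n : ℕ) : (Hr n).Monic :=
  (hermite_monic n).map _

lemma Hr_natDegree (n : ℕ) : (Hr n).natDegree = n := by
  rw [Hr, Polynomial.natDegree_map_eq_of_injective (fun a b h => by simpa using h)]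
  exact natDegree_hermite

lemma deriv_iter_gauss (n : ℕ) :
    deriv^[n] (fun y : ℝ => Real.exp (-(y ^ 2 / 2)))
      = fun x : ℝ => (-1 : ℝ) ^ n * (Hr n).eval x * Real.exp (-(x ^ 2 / 2)) := by
  funext x
  rw [Polynomial.deriv_gaussian_eq_hermite_mul_gaussian n x, aeval_hermite_eq_Hr]

lemma hasDerivAt_iter_gauss (n : ℕ) (x : ℝ) :
    HasDerivAt (deriv^[n] (fun y : ℝ => Real.exp (-(y ^ 2 / 2))))
      ((-1 : ℝ) ^ (n + 1) * (Hr (n+1)).eval x * Real.exp (-(x ^ 2 / 2))) x := by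
  rw [deriv_iter_gauss n]
  have h1 : HasDerivAt (fun y : ℝ => (Hr n).eval y) ((derivative (Hr n)).eval x) x :=
    Polynomial.hasDerivAt (Hr n) x
  have h2 : HasDerivAt (fun y : ℝ => Real.exp (-(y ^ 2 / 2)))
      ((-x) * Real.exp (-(x ^ 2 / 2))) x := by
    have h3 : HasDerivAt (fun y : ℝ => -(y ^ 2 / 2)) (-x) x := by
      have := ((hasDerivAt_pow 2 x).div_const 2).neg
      exact this.congr_deriv (by simp)
    have := h3.exp
    simpa [mul_comm] using this
  have h4 := (h1.mul h2).const_mul ((-1:ℝ)^n)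
  have h5 : (fun y : ℝ => (-1:ℝ) ^ n * ((Hr n).eval y * Real.exp (-(y ^ 2 / 2))))
      = (fun y : ℝ => (-1:ℝ) ^ n * (Hr n).eval y * Real.exp (-(y ^ 2 / 2))) := by
    funext y; ring
  simp only [Pi.mul_apply] at h4
  rw [h5] at h4
  refine h4.congr_deriv ?_
  rw [Hr_succ]
  simp only [Polynomial.eval_sub, Polynomial.eval_mul, Polynomial.eval_X]
  ring

lemma ibp_poly_gauss (n : ℕ) (p : ℝ[X]) :
    ∫ x : ℝ, p.eval x * deriv^[n] (fun y : ℝ => Real.exp (-(y ^ 2 / 2))) x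
      = (-1 : ℝ) ^ n * ∫ x : ℝ, (derivative^[n] p).eval x * Real.exp (-(x ^ 2 / 2)) := by
  induction n generalizing p with
  | zero => simp
  | succ n ih =>
    have hint : ∀ q : ℝ[X], Integrable (fun x : ℝ => q.eval x * Real.exp (-(x ^ 2 / 2))) := by
      intro q
      have := integrable_poly_gauss q
      simpa [Polynomial.coe_aeval_eq_eval] using this
    have key := MeasureTheory.integral_mul_deriv_eq_deriv_mul_of_integrable
      (u := fun x : ℝ => p.eval x)
      (u' := fun x : ℝ => (derivative p).eval x)
      (v := deriv^[n] (fun y : ℝ => Real.exp (-(y ^ 2 / 2))))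
      (v' := fun x : ℝ => (-1 : ℝ) ^ (n+1) * (Hr (n+1)).eval x * Real.exp (-(x ^ 2 / 2)))
      (fun x _ => Polynomial.hasDerivAt p x) (fun x _ => hasDerivAt_iter_gauss n x) ?_ ?_ ?_
    · have e1 : ∀ x : ℝ, deriv^[n+1] (fun y : ℝ => Real.exp (-(y ^ 2 / 2))) x
          = (-1 : ℝ) ^ (n+1) * (Hr (n+1)).eval x * Real.exp (-(x ^ 2 / 2)) := by
        intro x; rw [deriv_iter_gauss (n+1)]
      calc ∫ x : ℝ, p.eval x * deriv^[n+1] (fun y : ℝ => Real.exp (-(y ^ 2 / 2))) x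
          = ∫ x : ℝ, p.eval x * ((-1 : ℝ) ^ (n+1) * (Hr (n+1)).eval x * Real.exp (-(x ^ 2 / 2))) := by
            congr 1; funext x; rw [e1]
        _ = - ∫ x : ℝ, (derivative p).eval x * deriv^[n] (fun y : ℝ => Real.exp (-(y ^ 2 / 2))) x := key
        _ = - ((-1 : ℝ) ^ n * ∫ x : ℝ, (derivative^[n] (derivative p)).eval x * Real.exp (-(x ^ 2 / 2))) := by
            rw [ih (derivative p)]
        _ = (-1 : ℝ) ^ (n+1) * ∫ x : ℝ, (derivative^[n+1] p).eval x * Real.exp (-(x ^ 2 / 2)) := by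
            rw [Function.iterate_succ_apply]
            ring
    · have e : (fun x : ℝ => p.eval x * ((-1 : ℝ) ^ (n+1) * (Hr (n+1)).eval x * Real.exp (-(x ^ 2 / 2))))
          = fun x : ℝ => (((-1 : ℝ) ^ (n+1)) • (p * Hr (n+1))).eval x * Real.exp (-(x ^ 2 / 2)) := by
        funext x; simp; ring
      simpa [Pi.mul_def, e] using hint (((-1 : ℝ) ^ (n+1)) • (p * Hr (n+1)))
    · have e : (fun x : ℝ => (derivative p).eval x * deriv^[n] (fun y : ℝ => Real.exp (-(y ^ 2 / 2))) x)
          = fun x : ℝ => (((-1 : ℝ) ^ n) • (derivative p * Hr n)).eval x * Real.exp (-(x ^ 2 / 2)) := by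
        funext x; rw [deriv_iter_gauss n]; simp; ring
      simpa [Pi.mul_def] using (e ▸ hint (((-1 : ℝ) ^ n) • (derivative p * Hr n)))
    · have e : (fun x : ℝ => p.eval x * deriv^[n] (fun y : ℝ => Real.exp (-(y ^ 2 / 2))) x)
          = fun x : ℝ => (((-1 : ℝ) ^ n) • (p * Hr n)).eval x * Real.exp (-(x ^ 2 / 2)) := by
        funext x; rw [deriv_iter_gauss n]; simp; ring
      simpa [Pi.mul_def] using (e ▸ hint (((-1 : ℝ) ^ n) • (p * Hr n)))

lemma iterate_derivative_Hr_self (d : ℕ) :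
    derivative^[d] (Hr d) = C (d.factorial : ℝ) := by
  have hdeg : (derivative^[d] (Hr d)).natDegree = 0 := by
    have := Polynomial.natDegree_iterate_derivative (Hr d) d
    rw [Hr_natDegree] at this
    omega
  have := Polynomial.eq_C_of_natDegree_le_zero (le_of_eq hdeg)
  rw [this, Polynomial.coeff_iterate_derivative]
  have hc : (Hr d).coeff (0 + d) = 1 := by
    have h2 := Hr_monic d
    rw [Polynomial.Monic, Polynomial.leadingCoeff, Hr_natDegree] at h2
    simpa using h2
  rw [hc]
  simp [Nat.descFactorial_self]

lemma integral_gauss : ∫ x : ℝ, Real.exp (-(x ^ 2 / 2)) = Real.sqrt (2 * π) := by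
  have h := integral_gaussian (1/2 : ℝ)
  have e : ∀ x : ℝ, Real.exp (-(1/2 : ℝ) * x ^ 2) = Real.exp (-(x ^ 2 / 2)) := by
    intro x; congr 1; ring
  rw [show (π / (1/2 : ℝ)) = 2 * π by ring] at h
  rw [← h]
  congr 1; funext x; rw [e]

lemma Hr_sq_norm (d : ℕ) :
    ∫ x : ℝ, ((Hr d).eval x) ^ 2 * Real.exp (-(x ^ 2 / 2))
      = (d.factorial : ℝ) * Real.sqrt (2 * π) := by
  have h := ibp_poly_gauss d (Hr d)
  rw [iterate_derivative_Hr_self] at h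
  have e1 : ∫ x : ℝ, (Hr d).eval x * deriv^[d] (fun y : ℝ => Real.exp (-(y ^ 2 / 2))) x
      = (-1 : ℝ) ^ d * ∫ x : ℝ, ((Hr d).eval x) ^ 2 * Real.exp (-(x ^ 2 / 2)) := by
    rw [deriv_iter_gauss d, ← integral_const_mul]
    congr 1; funext x; ring
  have e2 : ∫ x : ℝ, (C (d.factorial : ℝ)).eval x * Real.exp (-(x ^ 2 / 2))
      = (d.factorial : ℝ) * Real.sqrt (2 * π) := by
    simp only [Polynomial.eval_C]
    rw [integral_const_mul, integral_gauss]
  rw [e1, e2] at h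
  have hpow : (-1 : ℝ) ^ d ≠ 0 := by
    simp [pow_ne_zero]
  exact mul_left_cancel₀ hpow h

lemma normHermite_sq_norm (d : ℕ) :
    ∫ x : ℝ, (normHermite d x) ^ 2 * Real.exp (-(x ^ 2 / 2)) = Real.sqrt (2 * π) := by
  have hf : (0:ℝ) < (d.factorial : ℝ) := by positivity
  have e : ∀ x : ℝ, (normHermite d x) ^ 2 * Real.exp (-(x ^ 2 / 2))
      = ((d.factorial : ℝ))⁻¹ * (((Hr d).eval x) ^ 2 * Real.exp (-(x ^ 2 / 2))) := by
    intro x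
    rw [normHermite, aeval_hermite_eq_Hr, div_pow, Real.sq_sqrt hf.le]
    ring
  calc ∫ x : ℝ, (normHermite d x) ^ 2 * Real.exp (-(x ^ 2 / 2))
      = ∫ x : ℝ, ((d.factorial : ℝ))⁻¹ * (((Hr d).eval x) ^ 2 * Real.exp (-(x ^ 2 / 2))) := by
        congr 1; funext x; rw [e]
    _ = ((d.factorial : ℝ))⁻¹ * ((d.factorial : ℝ) * Real.sqrt (2 * π)) := by
        rw [integral_const_mul, Hr_sq_norm]
    _ = Real.sqrt (2 * π) := by field_simp

lemma integrable_normHermite_sq (d : ℕ) :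
    Integrable (fun x : ℝ => (normHermite d x) ^ 2 * Real.exp (-(x ^ 2 / 2))) := by
  have e : (fun x : ℝ => (normHermite d x) ^ 2 * Real.exp (-(x ^ 2 / 2)))
      = fun x : ℝ => (((d.factorial : ℝ))⁻¹ • (Hr d * Hr d)).eval x * Real.exp (-(x ^ 2 / 2)) := by
    funext x
    have hf : (0:ℝ) < (d.factorial : ℝ) := by positivity
    rw [normHermite, aeval_hermite_eq_Hr, div_pow, Real.sq_sqrt hf.le]
    simp
    ring
  rw [e]
  simpa [Polynomial.coe_aeval_eq_eval] using integrable_poly_gauss (((d.factorial : ℝ))⁻¹ • (Hr d * Hr d))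

lemma integrable_gauss4 : Integrable (fun x : ℝ => Real.exp (-x ^ 2 / 4)) := by
  have := integrable_exp_neg_mul_sq (b := (1/4 : ℝ)) (by norm_num)
  have e : (fun x : ℝ => Real.exp (-(1/4 : ℝ) * x ^ 2)) = fun x : ℝ => Real.exp (-x ^ 2 / 4) := by
    funext x; congr 1; ring
  rwa [e] at this

lemma integral_gauss4_tail (b : ℝ) :
    ∫ x in Set.Ioi b, (x / 2) * Real.exp (-x ^ 2 / 4) = Real.exp (-b ^ 2 / 4) := by
  have hderiv : ∀ x ∈ Set.Ioi b, HasDerivAt (fun y : ℝ => -Real.exp (-y ^ 2 / 4))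
      ((x / 2) * Real.exp (-x ^ 2 / 4)) x := by
    intro x _
    have h3 : HasDerivAt (fun y : ℝ => -y ^ 2 / 4) (-x / 2) x := by
      have := ((hasDerivAt_pow 2 x).neg.div_const 4)
      refine this.congr_deriv ?_
      simp; ring
    have := h3.exp.neg
    refine this.congr_deriv ?_
    ring
  have hint : IntegrableOn (fun x : ℝ => (x / 2) * Real.exp (-x ^ 2 / 4)) (Set.Ioi b) := by
    have h0 := (integrable_mul_exp_neg_mul_sq (b := (1/4 : ℝ)) (by norm_num)).const_mul (1/2 : ℝ)
    have e : (fun x : ℝ => (1/2 : ℝ) * (x * Real.exp (-(1/4 : ℝ) * x ^ 2)))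
        = fun x : ℝ => (x / 2) * Real.exp (-x ^ 2 / 4) := by
      funext x; rw [show -(1/4 : ℝ) * x ^ 2 = -x ^ 2 / 4 by ring]; ring
    rw [e] at h0
    exact h0.integrableOn
  have htend : Filter.Tendsto (fun y : ℝ => -Real.exp (-y ^ 2 / 4)) Filter.atTop (nhds 0) := by
    have h1 : Filter.Tendsto (fun y : ℝ => -y ^ 2 / 4) Filter.atTop Filter.atBot := by
      apply Filter.Tendsto.atBot_div_const (by norm_num : (0:ℝ) < 4)
      have h0 : Filter.Tendsto (fun y : ℝ => y ^ 2) Filter.atTop Filter.atTop :=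
        Filter.tendsto_pow_atTop two_ne_zero
      have := Filter.tendsto_neg_atTop_atBot.comp h0
      exact this
    have := (Real.tendsto_exp_atBot.comp h1).neg
    simpa using this
  have hcont : ContinuousWithinAt (fun y : ℝ => -Real.exp (-y ^ 2 / 4)) (Set.Ici b) b := by
    apply Continuous.continuousWithinAt; continuity
  have := MeasureTheory.integral_Ioi_of_hasDerivAt_of_tendsto hcont hderiv hint htend
  rw [this]; simp

lemma gauss4_tail_le (a : ℝ) (ha : 1 ≤ a) :
    ∫ x in Set.Ioi a, Real.exp (-x ^ 2 / 4) ≤ (3/2) * Real.exp (-a ^ 2 / 4) := by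
  have hsplit : ∫ x in Set.Ioi a, Real.exp (-x ^ 2 / 4)
      = (∫ x in Set.Ioc a (a+1), Real.exp (-x ^ 2 / 4))
        + ∫ x in Set.Ioi (a+1), Real.exp (-x ^ 2 / 4) := by
    rw [← MeasureTheory.setIntegral_union (Set.Ioc_disjoint_Ioi le_rfl) measurableSet_Ioi
      integrable_gauss4.integrableOn integrable_gauss4.integrableOn]
    rw [Set.Ioc_union_Ioi_eq_Ioi (by linarith)]
  have h1 : ∫ x in Set.Ioc a (a+1), Real.exp (-x ^ 2 / 4) ≤ Real.exp (-a ^ 2 / 4) := by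
    have hconst : IntegrableOn (fun _ : ℝ => Real.exp (-a ^ 2 / 4)) (Set.Ioc a (a+1)) := by
      exact MeasureTheory.integrableOn_const (by simp [Real.volume_Ioc])
    have := MeasureTheory.setIntegral_mono_on (g := fun _ : ℝ => Real.exp (-a ^ 2 / 4))
      integrable_gauss4.integrableOn hconst measurableSet_Ioc
      (fun x hx => by
        have hx1 : a ≤ x := le_of_lt hx.1
        have : x ^ 2 ≥ a ^ 2 := by nlinarith
        apply Real.exp_le_exp.2
        linarith)
    calc ∫ x in Set.Ioc a (a+1), Real.exp (-x ^ 2 / 4)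
        ≤ ∫ _x in Set.Ioc a (a+1), Real.exp (-a ^ 2 / 4) := this
      _ = Real.exp (-a ^ 2 / 4) := by
          simp [Real.volume_Ioc]
  have h2 : ∫ x in Set.Ioi (a+1), Real.exp (-x ^ 2 / 4) ≤ (1/2) * Real.exp (-a ^ 2 / 4) := by
    have hint : IntegrableOn (fun x : ℝ => (x / 2) * Real.exp (-x ^ 2 / 4)) (Set.Ioi (a+1)) := by
      have h0 := (integrable_mul_exp_neg_mul_sq (b := (1/4 : ℝ)) (by norm_num)).const_mul (1/2 : ℝ)
      have e : (fun x : ℝ => (1/2 : ℝ) * (x * Real.exp (-(1/4 : ℝ) * x ^ 2)))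
          = fun x : ℝ => (x / 2) * Real.exp (-x ^ 2 / 4) := by
        funext x; rw [show -(1/4 : ℝ) * x ^ 2 = -x ^ 2 / 4 by ring]; ring
      rw [e] at h0
      exact h0.integrableOn
    have hmono := MeasureTheory.setIntegral_mono_on integrable_gauss4.integrableOn
      hint measurableSet_Ioi
      (fun x hx => by
        have hx2 : (2:ℝ) ≤ x := by have := Set.mem_Ioi.1 hx; linarith
        nlinarith [Real.exp_pos (-x ^ 2 / 4)])
    rw [integral_gauss4_tail (a+1)] at hmono
    have hdec : Real.exp (-(a+1) ^ 2 / 4) ≤ (1/2) * Real.exp (-a ^ 2 / 4) := by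
      have hq := Real.quadratic_le_exp_of_nonneg (by norm_num : (0:ℝ) ≤ 3/4)
      have h2e : (2:ℝ) ≤ Real.exp (3/4) := by norm_num at hq ⊢; linarith
      have : Real.exp (-(a+1) ^ 2 / 4) ≤ Real.exp (-a ^ 2 / 4 - 3/4) := by
        apply Real.exp_le_exp.2; nlinarith
      rw [Real.exp_sub] at this
      calc Real.exp (-(a+1) ^ 2 / 4) ≤ Real.exp (-a ^ 2 / 4) / Real.exp (3/4) := this
        _ ≤ (1/2) * Real.exp (-a ^ 2 / 4) := by
            rw [div_le_iff₀ (Real.exp_pos _)]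
            nlinarith [Real.exp_pos (-a ^ 2 / 4)]
    linarith
  linarith

lemma continuous_normHermite (d : ℕ) : Continuous (normHermite d) := by
  unfold normHermite
  exact (Polynomial.continuous_aeval (hermite d)).div_const _

lemma amgm_aux {c f g : ℝ} (hc : 0 < c) : f * g ≤ (c * f ^ 2 + g ^ 2 / c) / 2 := by
  rw [le_div_iff₀ (by norm_num : (0:ℝ) < 2), div_eq_mul_inv]
  have h := sq_nonneg (c * f - g)
  have h2 := mul_pos hc hc
  have h3 : c * c⁻¹ = 1 := mul_inv_cancel₀ hc.ne'
  nlinarith [sq_nonneg (c * f - g), mul_pos hc hc]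

/-- The inner integral bound: for `1 ≤ τ ≤ x`,
`∫ t in τ..x, |normHermite d t| / t ≤ c₀ * √(2π)` where
`c₀ = exp (x^2/4) / √(√(2π) * τ^3)`. -/
lemma inner_integral_bound (d : ℕ) {τ x : ℝ} (hτ : 1 ≤ τ) (hx : τ ≤ x) :
    (∫ t in τ..x, |normHermite d t| / t)
      ≤ (Real.exp (x ^ 2 / 4) / Real.sqrt (Real.sqrt (2 * π) * τ ^ 3)) * Real.sqrt (2 * π) := by
  obtain ⟨c₀, hc₀⟩ : ∃ c : ℝ, c = Real.exp (x ^ 2 / 4) / Real.sqrt (Real.sqrt (2 * π) * τ ^ 3) :=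
    ⟨_, rfl⟩
  have hsqrt2pi : (0:ℝ) < Real.sqrt (2 * π) := Real.sqrt_pos.2 (by positivity)
  have hτ3 : (0:ℝ) < τ ^ 3 := by positivity
  have hc₀pos : 0 < c₀ := by
    rw [hc₀]
    apply div_pos (Real.exp_pos _)
    exact Real.sqrt_pos.2 (by positivity)
  set f : ℝ → ℝ := fun t => |normHermite d t| * Real.exp (-(t ^ 2 / 4)) with hf
  set g : ℝ → ℝ := fun t => Real.exp (t ^ 2 / 4) / t with hg
  -- continuity facts
  have hgcont : ContinuousOn g (Set.uIcc τ x) := by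
    apply ContinuousOn.div
    · exact (Real.continuous_exp.comp (by continuity)).continuousOn
    · exact continuousOn_id
    · intro t ht
      rw [Set.uIcc_of_le hx] at ht
      have := ht.1; intro h0; rw [h0] at this; linarith
  have hhcont : ContinuousOn (fun t : ℝ => |normHermite d t| / t) (Set.uIcc τ x) := by
    apply ContinuousOn.div
    · exact ((continuous_normHermite d).abs).continuousOn
    · exact continuousOn_id
    · intro t ht
      rw [Set.uIcc_of_le hx] at ht
      have := ht.1; intro h0; rw [h0] at this; linarith
  have hfcont : Continuous f := ((continuous_normHermite d).abs).mul (by continuity)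
  have hrhs_cont : ContinuousOn (fun t : ℝ => (c₀ * f t ^ 2 + g t ^ 2 / c₀) / 2) (Set.uIcc τ x) := by
    apply ContinuousOn.div_const
    apply ContinuousOn.add
    · exact (hfcont.continuousOn.pow 2).const_smul c₀ |>.congr (fun t _ => by simp [smul_eq_mul])
    · exact (hgcont.pow 2).div_const c₀
  -- step 1 : pointwise AM-GM
  have step1 : (∫ t in τ..x, |normHermite d t| / t)
      ≤ ∫ t in τ..x, (c₀ * f t ^ 2 + g t ^ 2 / c₀) / 2 := by
    apply intervalIntegral.integral_mono_on hx
      (hhcont.intervalIntegrable) (hrhs_cont.intervalIntegrable)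
    intro t ht
    have ht1 : 1 ≤ t := le_trans hτ ht.1
    have htpos : 0 < t := by linarith
    have heq : |normHermite d t| / t = f t * g t := by
      have hE : Real.exp (-(t ^ 2 / 4)) * Real.exp (t ^ 2 / 4) = 1 := by
        rw [← Real.exp_add]; simp
      show |normHermite d t| / t
          = |normHermite d t| * Real.exp (-(t ^ 2 / 4)) * (Real.exp (t ^ 2 / 4) / t)
      calc |normHermite d t| / t = |normHermite d t| * 1 / t := by rw [mul_one]
        _ = _ := by rw [← hE]; ring
    rw [heq]
    exact amgm_aux hc₀pos
  -- step 2 : split the integral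
  have hb1 : IntervalIntegrable (fun t : ℝ => c₀ * f t ^ 2) MeasureTheory.volume τ x :=
    (continuous_const.mul (hfcont.pow 2)).intervalIntegrable τ x
  have hb2 : IntervalIntegrable (fun t : ℝ => g t ^ 2 / c₀) MeasureTheory.volume τ x :=
    ((hgcont.pow 2).div_const c₀).intervalIntegrable
  have step2 : (∫ t in τ..x, (c₀ * f t ^ 2 + g t ^ 2 / c₀) / 2)
      = (c₀ * (∫ t in τ..x, f t ^ 2) + (∫ t in τ..x, g t ^ 2) / c₀) / 2 := by
    rw [intervalIntegral.integral_div, intervalIntegral.integral_add hb1 hb2,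
      intervalIntegral.integral_const_mul, intervalIntegral.integral_div]
  -- step 3 : second-moment bound
  have step3 : (∫ t in τ..x, f t ^ 2) ≤ Real.sqrt (2 * π) := by
    have hfsq : (fun t : ℝ => f t ^ 2)
        = fun t : ℝ => (normHermite d t) ^ 2 * Real.exp (-(t ^ 2 / 2)) := by
      funext t
      rw [hf]
      simp only
      have hE2 : Real.exp (-(t ^ 2 / 4)) ^ 2 = Real.exp (-(t ^ 2 / 2)) := by
        rw [pow_two, ← Real.exp_add]; congr 1; ring
      rw [mul_pow, sq_abs, hE2]
    rw [hfsq, intervalIntegral.integral_of_le hx]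
    calc ∫ t in Set.Ioc τ x, (normHermite d t) ^ 2 * Real.exp (-(t ^ 2 / 2))
        ≤ ∫ t : ℝ, (normHermite d t) ^ 2 * Real.exp (-(t ^ 2 / 2)) := by
          apply MeasureTheory.setIntegral_le_integral (integrable_normHermite_sq d)
          filter_upwards with t
          positivity
      _ = Real.sqrt (2 * π) := normHermite_sq_norm d
  -- step 4 : bound on the exploding factor
  have step4 : (∫ t in τ..x, g t ^ 2) ≤ Real.exp (x ^ 2 / 2) / τ ^ 3 := by
    have hFT : ∀ t ∈ Set.uIcc τ x, HasDerivAt (fun y : ℝ => Real.exp (y ^ 2 / 2) / τ ^ 3)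
        (t * Real.exp (t ^ 2 / 2) / τ ^ 3) t := by
      intro t _
      have h1 : HasDerivAt (fun y : ℝ => y ^ 2 / 2) t t := by
        have := (hasDerivAt_pow 2 t).div_const 2
        simpa using this
      have := (h1.exp).div_const (τ ^ 3)
      refine this.congr_deriv ?_
      ring
    have hcontR : ContinuousOn (fun t : ℝ => t * Real.exp (t ^ 2 / 2) / τ ^ 3) (Set.uIcc τ x) :=
      (by continuity : Continuous (fun t : ℝ => t * Real.exp (t ^ 2 / 2) / τ ^ 3)).continuousOn
    have hFTC := intervalIntegral.integral_eq_sub_of_hasDerivAt hFT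
      (hcontR.intervalIntegrable)
    have hmono : (∫ t in τ..x, g t ^ 2)
        ≤ ∫ t in τ..x, t * Real.exp (t ^ 2 / 2) / τ ^ 3 := by
      apply intervalIntegral.integral_mono_on hx ((hgcont.pow 2).intervalIntegrable)
        (hcontR.intervalIntegrable)
      intro t ht
      have ht1 : 1 ≤ t := le_trans hτ ht.1
      have htτ : τ ≤ t := ht.1
      have h4 : g t ^ 2 = Real.exp (t ^ 2 / 2) / t ^ 2 := by
        rw [hg]
        simp only
        rw [div_pow]
        congr 1
        rw [pow_two, ← Real.exp_add]; congr 1; ring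
      rw [Pi.pow_apply, h4]
      rw [div_le_div_iff₀ (by positivity) (by positivity)]
      have hE : (0:ℝ) < Real.exp (t ^ 2 / 2) := Real.exp_pos _
      have h6 : τ ^ 3 ≤ t ^ 3 := pow_le_pow_left₀ (by linarith) htτ 3
      nlinarith [mul_le_mul_of_nonneg_left h6 hE.le]
    rw [hFTC] at hmono
    have : Real.exp (x ^ 2 / 2) / τ ^ 3 - Real.exp (τ ^ 2 / 2) / τ ^ 3
        ≤ Real.exp (x ^ 2 / 2) / τ ^ 3 := by
      have : (0:ℝ) < Real.exp (τ ^ 2 / 2) / τ ^ 3 := by positivity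
      linarith
    linarith
  -- step 5 : combine
  have hc₀sq : c₀ ^ 2 * Real.sqrt (2 * π) = Real.exp (x ^ 2 / 2) / τ ^ 3 := by
    rw [hc₀, div_pow, Real.sq_sqrt (by positivity : (0:ℝ) ≤ Real.sqrt (2 * π) * τ ^ 3),
      pow_two, ← Real.exp_add, show x ^ 2 / 4 + x ^ 2 / 4 = x ^ 2 / 2 by ring]
    field_simp
  calc (∫ t in τ..x, |normHermite d t| / t)
      ≤ (∫ t in τ..x, (c₀ * f t ^ 2 + g t ^ 2 / c₀) / 2) := step1
    _ = (c₀ * (∫ t in τ..x, f t ^ 2) + (∫ t in τ..x, g t ^ 2) / c₀) / 2 := step2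
    _ ≤ (c₀ * Real.sqrt (2 * π) + (Real.exp (x ^ 2 / 2) / τ ^ 3) / c₀) / 2 := by
        have h1 := mul_le_mul_of_nonneg_left step3 hc₀pos.le
        have h2 : (∫ t in τ..x, g t ^ 2) / c₀ ≤ (Real.exp (x ^ 2 / 2) / τ ^ 3) / c₀ := by
          gcongr
        linarith
    _ = c₀ * Real.sqrt (2 * π) := by
        rw [← hc₀sq]
        have hcc : c₀ ^ 2 * Real.sqrt (2 * π) / c₀ = c₀ * Real.sqrt (2 * π) := by
          rw [pow_two, mul_assoc]
          exact mul_div_cancel_left₀ _ hc₀pos.ne'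
        rw [hcc]
        ring
    _ = Real.exp (x ^ 2 / 4) / Real.sqrt (Real.sqrt (2 * π) * τ ^ 3) * Real.sqrt (2 * π) := by
        rw [hc₀]

theorem stmt_14 (d : ℕ) (hd : 0 < d) (τ : ℝ) (hτ : 1 ≤ τ) :
    ∫ x in Set.Ioi (0 : ℝ),
        (∫ t in τ..(max x τ), |normHermite d t| / t) * gaussDensity x
      ≤ Real.exp (-τ ^ 2 / 4) := by
  have hsqrt2pi : (0:ℝ) < Real.sqrt (2 * π) := Real.sqrt_pos.2 (by positivity)
  set C : ℝ := Real.sqrt (Real.sqrt (2 * π) * τ ^ 3) with hCdef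
  have hτ3 : (1:ℝ) ≤ τ ^ 3 := one_le_pow₀ hτ
  have h2pi : (9:ℝ)/4 ≤ Real.sqrt (2 * π) := by
    rw [show (9:ℝ)/4 = Real.sqrt ((9/4)^2) by rw [Real.sqrt_sq (by norm_num)]]
    apply Real.sqrt_le_sqrt
    nlinarith [Real.pi_gt_three]
  have hC32 : (3:ℝ)/2 ≤ C := by
    rw [hCdef, show (3:ℝ)/2 = Real.sqrt ((3/2)^2) by rw [Real.sqrt_sq (by norm_num)]]
    apply Real.sqrt_le_sqrt
    nlinarith
  have hCpos : (0:ℝ) < C := by linarith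
  -- the modified integrand
  set h : ℝ → ℝ := fun t => |normHermite d t| / max t 1 with hh
  have hhcont : Continuous h := by
    apply Continuous.div ((continuous_normHermite d).abs)
      (continuous_id.max continuous_const)
    intro t
    exact ne_of_gt (lt_of_lt_of_le one_pos (le_max_right _ _))
  set F : ℝ → ℝ := fun x => ∫ t in τ..(max x τ), h t with hF
  have hFcont : Continuous F := by
    have h1 : Continuous (fun y : ℝ => ∫ t in τ..y, h t) :=
      intervalIntegral.continuous_primitive (fun a b => hhcont.intervalIntegrable a b) τ
    exact h1.comp (continuous_id.max continuous_const)
  have hFeq : ∀ x : ℝ, (∫ t in τ..(max x τ), |normHermite d t| / t) = F x := by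
    intro x
    apply intervalIntegral.integral_congr
    intro t ht
    rw [Set.uIcc_of_le (le_max_right x τ)] at ht
    have ht1 : (1:ℝ) ≤ t := le_trans hτ ht.1
    rw [hh]
    simp only
    rw [max_eq_left ht1]
  have hFnonneg : ∀ x : ℝ, 0 ≤ F x := by
    intro x
    apply intervalIntegral.integral_nonneg (le_max_right x τ)
    intro t _
    rw [hh]
    simp only
    positivity
  have hgd_nonneg : ∀ x : ℝ, 0 ≤ gaussDensity x := by
    intro x; rw [gaussDensity]; positivity
  set M : ℝ → ℝ := Set.indicator (Set.Ioi τ) (fun x => Real.exp (-x ^ 2 / 4) / C) with hM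
  -- pointwise bound
  have hpt : ∀ x : ℝ, F x * gaussDensity x ≤ M x := by
    intro x
    rcases le_or_gt x τ with hxτ | hxτ
    · have h1 : F x = 0 := by
        rw [hF]; simp only
        rw [max_eq_right hxτ, intervalIntegral.integral_same]
      have h2 : M x = 0 := by
        rw [hM, Set.indicator_of_notMem (by simpa using hxτ)]
      rw [h1, h2, zero_mul]
    · have hmax : max x τ = x := max_eq_left hxτ.le
      have hFb : F x ≤ Real.exp (x ^ 2 / 4) / C * Real.sqrt (2 * π) := by
        rw [← hFeq x, hmax]
        exact inner_integral_bound d hτ hxτ.le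
      have hMx : M x = Real.exp (-x ^ 2 / 4) / C := by
        rw [hM, Set.indicator_of_mem (Set.mem_Ioi.2 hxτ)]
      rw [hMx]
      calc F x * gaussDensity x
          ≤ (Real.exp (x ^ 2 / 4) / C * Real.sqrt (2 * π)) * gaussDensity x :=
            mul_le_mul_of_nonneg_right hFb (hgd_nonneg x)
        _ = (Real.exp (x ^ 2 / 4) * Real.exp (-x ^ 2 / 2)) / C
              * (Real.sqrt (2 * π) / Real.sqrt (2 * π)) := by
            rw [gaussDensity]; ring
        _ = Real.exp (-x ^ 2 / 4) / C := by
            rw [div_self hsqrt2pi.ne', ← Real.exp_add,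
              show x ^ 2 / 4 + -x ^ 2 / 2 = -x ^ 2 / 4 by ring, mul_one]
  -- integrability
  have hM_int : Integrable M := by
    rw [hM]
    exact (integrable_gauss4.div_const C).indicator measurableSet_Ioi
  have hG_int : IntegrableOn (fun x : ℝ => F x * gaussDensity x) (Set.Ioi 0) := by
    apply Integrable.mono' hM_int.integrableOn
    · exact (hFcont.mul (by rw [show gaussDensity = fun x : ℝ => Real.exp (-x ^ 2 / 2) / Real.sqrt (2 * π) from rfl]; continuity)).aestronglyMeasurable.restrict
    · filter_upwards with x
      rw [Real.norm_eq_abs, abs_of_nonneg (mul_nonneg (hFnonneg x) (hgd_nonneg x))]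
      exact hpt x
  -- main chain
  calc ∫ x in Set.Ioi (0:ℝ), (∫ t in τ..(max x τ), |normHermite d t| / t) * gaussDensity x
      = ∫ x in Set.Ioi (0:ℝ), F x * gaussDensity x := by
        apply MeasureTheory.setIntegral_congr_fun measurableSet_Ioi
        intro x _
        show (∫ t in τ..(max x τ), |normHermite d t| / t) * gaussDensity x
          = F x * gaussDensity x
        rw [hFeq x]
    _ ≤ ∫ x in Set.Ioi (0:ℝ), M x :=
        MeasureTheory.setIntegral_mono_on hG_int hM_int.integrableOn measurableSet_Ioi
          (fun x _ => hpt x)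
    _ = ∫ x in Set.Ioi τ, Real.exp (-x ^ 2 / 4) / C := by
        rw [hM, MeasureTheory.setIntegral_indicator measurableSet_Ioi,
          Set.inter_eq_right.mpr (Set.Ioi_subset_Ioi (by linarith))]
    _ = (∫ x in Set.Ioi τ, Real.exp (-x ^ 2 / 4)) / C := by
        rw [integral_div]
    _ ≤ ((3/2) * Real.exp (-τ ^ 2 / 4)) / C := by
        gcongr
        exact gauss4_tail_le τ hτ
    _ ≤ Real.exp (-τ ^ 2 / 4) := by
        rw [div_le_iff₀ hCpos]
        nlinarith [Real.exp_pos (-τ ^ 2 / 4)]
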